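/- Let t ≥ 1 and let G = t·K_{1,2} be the disjoint union of t paths on 3 vertices (so n = 3t vertices and m = 2t edges). Then the characteristic polynomial of the adjacency matrix of the complete subdivision graph of G, namely of the 5t×5t block matrix [[0_{3t×3t}, B(G)],[B(G)ᵀ, J_{2t} − I_{2t}]], equals x^t · (x² + x − 1)^t · (x² + x − 3)^{t−1} · (x² − (2t−1)x − 3). -/

import Mathlib

open Matrix Kronecker Polynomial

/-- The vertex–edge incidence matrix of $t\cdot K_{1,2}$, the disjoint union of
`t` paths on 3 vertices: in each copy `s`, the vertices are `(s,0),(s,1),(s,2)`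
and edge `(s,e)` joins `(s,e)` and `(s,e+1)`. -/
def tK12B (t : ℕ) : Matrix (Fin t × Fin 3) (Fin t × Fin 2) ℝ :=
  Matrix.of fun v e =>
    if v.1 = e.1 ∧ (v.2 = e.2.castSucc ∨ v.2 = e.2.succ) then 1 else 0


private def B1 : Matrix (Fin 3) (Fin 2) ℝ := !![1,0;1,1;0,1]

lemma tK12B_eq (t : ℕ) : tK12B t = (1 : Matrix (Fin t) (Fin t) ℝ) ⊗ₖ B1 := by
  ext ⟨s, i⟩ ⟨u, j⟩
  simp only [tK12B, Matrix.of_apply, Matrix.kroneckerMap_apply, Matrix.one_apply]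
  rcases eq_or_ne s u with h | h
  · subst h
    simp only [if_pos rfl, true_and, one_mul]
    fin_cases i <;> fin_cases j <;> norm_num [B1, Matrix.vecHead, Matrix.vecTail, Fin.ext_iff]
  · simp [h]

lemma B1tB1 : B1ᵀ * B1 = !![2,1;1,2] := by
  ext i j
  fin_cases i <;> fin_cases j <;>
    norm_num [B1, Matrix.mul_apply, Fin.sum_univ_three, Matrix.vecHead, Matrix.vecTail, Fin.ext_iff] <;> simp <;> norm_num

set_option maxHeartbeats 2000000 in
lemma key (t : ℕ) (ht : 1 ≤ t) (x : ℝ) (hx : x ≠ 0)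
    (h1 : x ^ 2 + x - 1 ≠ 0) (h3 : x ^ 2 + x - 3 ≠ 0) :
    (x • (1 : Matrix ((Fin t × Fin 3) ⊕ (Fin t × Fin 2))
            ((Fin t × Fin 3) ⊕ (Fin t × Fin 2)) ℝ) -
        Matrix.fromBlocks 0 (tK12B t) (tK12B t)ᵀ
          (Matrix.of (fun _ _ => (1 : ℝ)) - 1)).det
      = x ^ t * (x ^ 2 + x - 1) ^ t * (x ^ 2 + x - 3) ^ (t - 1) *
          (x ^ 2 - (2 * (t : ℝ) - 1) * x - 3) := by
  obtain ⟨k, rfl⟩ : ∃ k, t = k + 1 := ⟨t - 1, (Nat.succ_pred_eq_of_pos ht).symm⟩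
  have hene : (x ^ 2 + x - 1) * (x ^ 2 + x - 3) ≠ 0 := mul_ne_zero h1 h3
  have h1' : x * (x + 1) - 1 ≠ 0 := by convert h1 using 1; ring
  have h3' : x * (x + 1) - 3 ≠ 0 := by convert h3 using 1; ring
  set t := k + 1 with htk
  set B : Matrix (Fin t × Fin 3) (Fin t × Fin 2) ℝ := tK12B t with hB
  set Jb : Matrix (Fin t × Fin 2) (Fin t × Fin 2) ℝ := Matrix.of (fun _ _ => (1 : ℝ)) with hJb
  set T2 : Matrix (Fin 2) (Fin 2) ℝ := !![x+1-2/x, -(1/x); -(1/x), x+1-2/x] with hT2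
  set T2' : Matrix (Fin 2) (Fin 2) ℝ :=
    !![x*(x^2+x-2)/((x^2+x-1)*(x^2+x-3)), x/((x^2+x-1)*(x^2+x-3));
       x/((x^2+x-1)*(x^2+x-3)), x*(x^2+x-2)/((x^2+x-1)*(x^2+x-3))] with hT2'
  have hT2mul : T2 * T2' = 1 := by
    ext i j
    fin_cases i <;> fin_cases j <;>
      · simp [hT2, hT2', Matrix.mul_apply, Fin.sum_univ_two, Matrix.one_apply,
          Matrix.vecHead, Matrix.vecTail]
        field_simp
        ring
  have hT2mul' : T2' * T2 = 1 := by
    ext i j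
    fin_cases i <;> fin_cases j <;>
      · simp [hT2, hT2', Matrix.mul_apply, Fin.sum_univ_two, Matrix.one_apply,
          Matrix.vecHead, Matrix.vecTail]
        field_simp
        ring
  have hT2det : T2.det = ((x^2+x-1)*(x^2+x-3))/x^2 := by
    rw [hT2, Matrix.det_fin_two_of]
    field_simp
    ring
  -- block decomposition
  have hblock : x • (1 : Matrix ((Fin t × Fin 3) ⊕ (Fin t × Fin 2))
            ((Fin t × Fin 3) ⊕ (Fin t × Fin 2)) ℝ) -
        Matrix.fromBlocks 0 B Bᵀ (Jb - 1)
      = Matrix.fromBlocks (x • 1) (-B) (-Bᵀ) (x • 1 - (Jb - 1)) := by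
    ext (i | i) (j | j) <;> simp [Matrix.one_apply]
  haveI : Invertible (x • (1 : Matrix (Fin t × Fin 3) (Fin t × Fin 3) ℝ)) :=
    ⟨x⁻¹ • 1, by rw [smul_mul_assoc, one_mul, smul_smul, inv_mul_cancel₀ hx, one_smul],
               by rw [smul_mul_assoc, one_mul, smul_smul, mul_inv_cancel₀ hx, one_smul]⟩
  rw [hblock, det_fromBlocks₁₁]
  have hinv : ⅟(x • (1 : Matrix (Fin t × Fin 3) (Fin t × Fin 3) ℝ)) = x⁻¹ • 1 :=
    invOf_eq_right_inv
      (by rw [smul_mul_assoc, one_mul, smul_smul, mul_inv_cancel₀ hx, one_smul])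
  rw [hinv]
  have hdetA : (x • (1 : Matrix (Fin t × Fin 3) (Fin t × Fin 3) ℝ)).det = x ^ (t * 3) := by
    rw [det_smul, det_one, mul_one, Fintype.card_prod, Fintype.card_fin, Fintype.card_fin]
  rw [hdetA]
  -- the Schur complement
  have hBtB : Bᵀ * B = (1 : Matrix (Fin t) (Fin t) ℝ) ⊗ₖ !![2,1;1,2] := by
    rw [hB, tK12B_eq, ← kroneckerMap_transpose, transpose_one, ← mul_kronecker_mul,
      Matrix.one_mul, B1tB1]
  have hschur : (-Bᵀ) * (x⁻¹ • (1 : Matrix (Fin t × Fin 3) (Fin t × Fin 3) ℝ)) * (-B)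
      = x⁻¹ • (Bᵀ * B) := by
    rw [Matrix.mul_smul, Matrix.mul_one, Matrix.smul_mul, Matrix.neg_mul, Matrix.mul_neg, neg_neg]
  rw [hschur, hBtB]
  have hS : (x • 1 - (Jb - 1)) - x⁻¹ • ((1 : Matrix (Fin t) (Fin t) ℝ) ⊗ₖ !![2,1;1,2])
      = ((1 : Matrix (Fin t) (Fin t) ℝ) ⊗ₖ T2) - Jb := by
    ext ⟨s, i⟩ ⟨u, j⟩
    rcases eq_or_ne s u with rfl | hsu
    · fin_cases i <;> fin_cases j <;>
        · simp [Matrix.one_apply, Matrix.kroneckerMap_apply, hT2, hJb, Prod.ext_iff,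
            Matrix.vecHead, Matrix.vecTail]
          field_simp
          ring
    · simp [Matrix.one_apply, Matrix.kroneckerMap_apply, hT2, hJb, Prod.ext_iff, hsu]
  rw [hS]
  -- rank-one update determinant
  set U : Matrix (Fin t × Fin 2) Unit ℝ := Matrix.of (fun _ _ => (1 : ℝ)) with hU
  set V : Matrix Unit (Fin t × Fin 2) ℝ := Matrix.of (fun _ _ => (1 : ℝ)) with hV
  have hUV : U * V = Jb := by
    ext a b
    simp [Matrix.mul_apply, hU, hV, hJb]
  haveI : Invertible ((1 : Matrix (Fin t) (Fin t) ℝ) ⊗ₖ T2) :=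
    ⟨(1 : Matrix (Fin t) (Fin t) ℝ) ⊗ₖ T2',
      by rw [← mul_kronecker_mul, Matrix.one_mul, hT2mul', one_kronecker_one],
      by rw [← mul_kronecker_mul, Matrix.one_mul, hT2mul, one_kronecker_one]⟩
  have hdetS : (((1 : Matrix (Fin t) (Fin t) ℝ) ⊗ₖ T2) - Jb).det
      = (((1 : Matrix (Fin t) (Fin t) ℝ) ⊗ₖ T2)).det *
        ((1 : Matrix Unit Unit ℝ) -
          V * ((1 : Matrix (Fin t) (Fin t) ℝ) ⊗ₖ T2') * U).det := by
    rw [← hUV, ← det_fromBlocks_one₁₁ V U ((1 : Matrix (Fin t) (Fin t) ℝ) ⊗ₖ T2),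
      det_fromBlocks₂₂]
    congr 1
    rw [invOf_eq_right_inv
      (by rw [← mul_kronecker_mul, Matrix.one_mul, hT2mul, one_kronecker_one])]
  rw [hdetS]
  have hdetT : (((1 : Matrix (Fin t) (Fin t) ℝ) ⊗ₖ T2)).det
      = (((x^2+x-1)*(x^2+x-3))/x^2) ^ t := by
    rw [det_kronecker, det_one, one_pow, one_mul, hT2det, Fintype.card_fin]
  rw [hdetT]
  have hunit : ((1 : Matrix Unit Unit ℝ) -
      V * ((1 : Matrix (Fin t) (Fin t) ℝ) ⊗ₖ T2') * U).det
      = 1 - (t : ℝ) * ((2*(x*(x^2+x-2)) + 2*x) / ((x^2+x-1)*(x^2+x-3))) := by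
    rw [det_unique]
    simp [Matrix.mul_apply, hU, hV, Matrix.one_apply, Fintype.sum_prod_type,
      Matrix.kroneckerMap_apply, Fin.sum_univ_two, hT2', Finset.sum_ite_eq,
      Finset.sum_const, Finset.card_univ, Fintype.card_fin, Matrix.vecHead, Matrix.vecTail]
    field_simp
    ring
  rw [hunit]
  have hcast : ((t : ℕ) : ℝ) = (k : ℝ) + 1 := by rw [htk]; push_cast; ring
  rw [htk, hcast, Nat.add_sub_cancel]
  rw [div_pow, mul_pow]
  field_simp
  ring

noncomputable def Q17 (t : ℕ) : Polynomial ℝ :=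
  X ^ t * (X ^ 2 + X - 1) ^ t * (X ^ 2 + X - 3) ^ (t - 1) *
    (X ^ 2 - C (2 * (t : ℝ) - 1) * X - C 3)

lemma evalQ17 (t : ℕ) (x : ℝ) :
    (Q17 t).eval x = x ^ t * (x ^ 2 + x - 1) ^ t * (x ^ 2 + x - 3) ^ (t - 1) *
      (x ^ 2 - (2 * (t : ℝ) - 1) * x - 3) := by
  simp [Q17]

/-- `A`-characteristic polynomial of the complete subdivision
graph of $t\cdot K_{1,2}$. -/
theorem stmt_17 (t : ℕ) (ht : 1 ≤ t) (x : ℝ) :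
    (x • (1 : Matrix ((Fin t × Fin 3) ⊕ (Fin t × Fin 2))
            ((Fin t × Fin 3) ⊕ (Fin t × Fin 2)) ℝ) -
        Matrix.fromBlocks 0 (tK12B t) (tK12B t)ᵀ
          (Matrix.of (fun _ _ => (1 : ℝ)) - 1)).det
      = x ^ t * (x ^ 2 + x - 1) ^ t * (x ^ 2 + x - 3) ^ (t - 1) *
          (x ^ 2 - (2 * (t : ℝ) - 1) * x - 3) := by
  set M0 : Matrix ((Fin t × Fin 3) ⊕ (Fin t × Fin 2)) ((Fin t × Fin 3) ⊕ (Fin t × Fin 2)) ℝ :=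
    Matrix.fromBlocks 0 (tK12B t) (tK12B t)ᵀ (Matrix.of (fun _ _ => (1 : ℝ)) - 1) with hM0
  have heval : ∀ y : ℝ, ((charmatrix M0).det).eval y = (y • 1 - M0).det := by
    intro y
    rw [show ((charmatrix M0).det).eval y = (Polynomial.evalRingHom y) ((charmatrix M0).det)
        from rfl, RingHom.map_det]
    congr 1
    ext i j
    by_cases h : i = j
    · subst h
      simp [charmatrix_apply_eq, Matrix.one_apply]
    · simp [charmatrix_apply_ne _ _ _ h, Matrix.one_apply, h]
  have hp : (X * (X ^ 2 + X - 1) * (X ^ 2 + X - 3) : Polynomial ℝ) ≠ 0 := by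
    intro h
    have h1 := congrArg (Polynomial.eval 1) h
    simp at h1
    norm_num at h1
  have hsub : {y : ℝ | y ≠ 0 ∧ y ^ 2 + y - 1 ≠ 0 ∧ y ^ 2 + y - 3 ≠ 0}
      ⊆ {y | IsRoot ((charmatrix M0).det - Q17 t) y} := by
    rintro y ⟨hy0, hy1, hy3⟩
    simp only [Set.mem_setOf_eq, IsRoot, eval_sub]
    rw [heval, evalQ17, hM0, key t ht y hy0 hy1 hy3, sub_self]
  have hfin : {y : ℝ | y ≠ 0 ∧ y ^ 2 + y - 1 ≠ 0 ∧ y ^ 2 + y - 3 ≠ 0}ᶜ.Finite := by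
    apply Set.Finite.subset (Polynomial.finite_setOf_isRoot hp)
    intro y hy
    simp only [Set.mem_compl_iff, Set.mem_setOf_eq, not_and_or, not_not] at hy
    simp only [Set.mem_setOf_eq, IsRoot, eval_mul, eval_add, eval_sub, eval_pow, eval_X,
      eval_one, eval_ofNat]
    rcases hy with h | h | h <;> rw [h] <;> ring
  have hinf : {y : ℝ | y ≠ 0 ∧ y ^ 2 + y - 1 ≠ 0 ∧ y ^ 2 + y - 3 ≠ 0}.Infinite := by
    simpa using hfin.infinite_compl
  have hzero := Polynomial.eq_zero_of_infinite_isRoot _ (hinf.mono hsub)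
  have hpq : (charmatrix M0).det = Q17 t := sub_eq_zero.mp hzero
  calc (x • 1 - M0).det = ((charmatrix M0).det).eval x := (heval x).symm
    _ = (Q17 t).eval x := by rw [hpq]
    _ = _ := evalQ17 t x
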